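/- arXiv:0911.5589 — 4 statements merged into one kernel-verified Lean document; each statement's English description precedes it below -/
import Mathlib

section
/- Let G be a finite noncyclic group and Γ(G) its generating graph (vertices are the nonidentity elements of G, with x and y joined iff ⟨x,y⟩ = G). For nonidentity elements s, g ∈ G, the number of elements x in the conjugacy class of g with ⟨s,x⟩ = G, multiplied by |C_G(g)|, equals the number of elements y in the conjugacy class of s with ⟨g,y⟩ = G, multiplied by |C_G(s)|. That is, d(s, g^G)·|C_G(g)| = d(g, s^G)·|C_G(s)|. -/
open Subgroup

private lemma conj_closure_top {G : Type*} [Group G] (c x y : G) :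
    Subgroup.closure {x, y} = ⊤ ↔
      Subgroup.closure {c * x * c⁻¹, c * y * c⁻¹} = ⊤ := by
  set f := (MulAut.conj c).toMonoidHom
  have hinj : Function.Injective f := (MulAut.conj c).injective
  constructor
  · intro h
    have := congrArg (Subgroup.map f) h
    rw [MonoidHom.map_closure, Subgroup.map_top_of_surjective _ (MulAut.conj c).surjective,
      Set.image_pair] at this
    simpa [f, MulAut.conj_apply] using this
  · intro h
    apply Subgroup.map_injective hinj
    rw [MonoidHom.map_closure, Subgroup.map_top_of_surjective _ (MulAut.conj c).surjective,
      Set.image_pair]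
    simpa [f, MulAut.conj_apply] using h

private lemma count_key {G : Type*} [Group G] [Finite G] (s g : G) :
    {x : G | IsConj g x ∧ Subgroup.closure {s, x} = ⊤}.ncard
        * Nat.card (Subgroup.centralizer {g})
      = Nat.card {a : G // Subgroup.closure {s, a * g * a⁻¹} = ⊤} := by
  classical
  have : Fintype G := Fintype.ofFinite G
  -- finset versions
  set S : Finset G := Finset.univ.filter
    (fun x => IsConj g x ∧ Subgroup.closure {s, x} = ⊤) with hS
  set A : Finset G := Finset.univ.filter
    (fun a => Subgroup.closure {s, a * g * a⁻¹} = ⊤) with hA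
  have hAcard : Nat.card {a : G // Subgroup.closure {s, a * g * a⁻¹} = ⊤} = A.card := by
    rw [Nat.card_eq_fintype_card, Fintype.card_subtype]
  have hScard : {x : G | IsConj g x ∧ Subgroup.closure {s, x} = ⊤}.ncard = S.card := by
    rw [hS, ← Set.ncard_coe_finset]
    congr 1
    ext x; simp
  have hfiber : ∀ x ∈ S, (Finset.univ.filter (fun a => a * g * a⁻¹ = x)).card
      = Nat.card (Subgroup.centralizer {g}) := by
    intro x hx
    have hconj : IsConj g x := (Finset.mem_filter.mp hx).2.1
    obtain ⟨c, hc'⟩ := isConj_iff.mp hconj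
    rw [Nat.card_eq_fintype_card, Fintype.card_subtype]
    apply Finset.card_bij (fun a _ => c⁻¹ * a)
    · intro a ha
      simp only [Finset.mem_filter, Finset.mem_univ, true_and] at ha
      simp only [Finset.mem_filter, Finset.mem_univ, true_and,
        mem_centralizer_singleton_iff]
      have : (c⁻¹ * a) * g * (c⁻¹ * a)⁻¹ = g := by
        have : a * g * a⁻¹ = c * g * c⁻¹ := by rw [ha, hc']
        calc (c⁻¹ * a) * g * (c⁻¹ * a)⁻¹ = c⁻¹ * (a * g * a⁻¹) * c := by group
          _ = c⁻¹ * (c * g * c⁻¹) * c := by rw [this]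
          _ = g := by group
      calc (c⁻¹ * a) * g = ((c⁻¹ * a) * g * (c⁻¹ * a)⁻¹) * (c⁻¹ * a) := by group
        _ = g * (c⁻¹ * a) := by rw [this]
    · intro a ha b hb hab
      exact mul_left_cancel hab
    · intro b hb
      refine ⟨c * b, ?_, by group⟩
      simp only [Finset.mem_filter, Finset.mem_univ, true_and,
        mem_centralizer_singleton_iff] at hb
      simp only [Finset.mem_filter, Finset.mem_univ, true_and]
      have hbg : b * g * b⁻¹ = g := by
        rw [hb]; group
      calc (c * b) * g * (c * b)⁻¹ = c * (b * g * b⁻¹) * c⁻¹ := by group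
        _ = c * g * c⁻¹ := by rw [hbg]
        _ = x := hc'
  have hAeq : A = S.biUnion (fun x => Finset.univ.filter (fun a => a * g * a⁻¹ = x)) := by
    ext a
    simp only [hA, hS, Finset.mem_filter, Finset.mem_univ, true_and, Finset.mem_biUnion]
    constructor
    · intro h
      exact ⟨a * g * a⁻¹, ⟨isConj_iff.mpr ⟨a, rfl⟩, h⟩, rfl⟩
    · rintro ⟨x, ⟨_, hx⟩, rfl⟩
      exact hx
  rw [hAcard, hScard, hAeq, Finset.card_biUnion]
  · rw [Finset.sum_congr rfl hfiber, Finset.sum_const, smul_eq_mul]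
  · intro x hx y hy hxy
    simp only [Finset.disjoint_left, Finset.mem_filter, Finset.mem_univ, true_and]
    rintro a rfl h
    exact hxy h

/-- `d(s, g^G) ⬝ |C_G(g)| = d(g, s^G) ⬝ |C_G(s)|`. -/
theorem stmt_0 {G : Type*} [Group G] [Finite G] (hG : ¬ IsCyclic G)
    (s g : G) (hs : s ≠ 1) (hg : g ≠ 1) :
    {x : G | IsConj g x ∧ Subgroup.closure {s, x} = ⊤}.ncard
        * Nat.card (Subgroup.centralizer {g}) =
      {y : G | IsConj s y ∧ Subgroup.closure {g, y} = ⊤}.ncard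
        * Nat.card (Subgroup.centralizer {s}) := by
  rw [count_key, count_key]
  apply Nat.card_congr
  refine ⟨fun a => ⟨(a : G)⁻¹, ?_⟩, fun a => ⟨(a : G)⁻¹, ?_⟩, fun a => by simp, fun a => by simp⟩
  · obtain ⟨a, ha⟩ := a
    have := (conj_closure_top a⁻¹ s (a * g * a⁻¹)).mp ha
    rw [Set.pair_comm] at this
    convert this using 3 <;> group
  · obtain ⟨a, ha⟩ := a
    have := (conj_closure_top a⁻¹ g (a * s * a⁻¹)).mp ha
    rw [Set.pair_comm] at this
    convert this using 3 <;> group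
end

section
/- Let Γ be a finite graph with m ≥ 3 vertices and vertex degrees d_1 ≤ d_2 ≤ ⋯ ≤ d_m. If d_k ≥ k+1 for all k with 1 ≤ k < m/2, then Γ contains a Hamiltonian cycle (Pósa's criterion). -/
open Finset List
set_option linter.unusedSectionVars false

noncomputable def vertexDegree {V : Type*} (Γ : SimpleGraph V) (x : V) : ℕ :=
  (Γ.neighborSet x).ncard

namespace PosaAux

variable {V : Type*} [Fintype V] [DecidableEq V]

/-- A cyclic list witnessing a Hamiltonian cycle. -/
def IsHamList (G : SimpleGraph V) (L : List V) : Prop :=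
  L.Nodup ∧ (∀ x, x ∈ L) ∧ 3 ≤ L.length ∧ L.Chain' G.Adj ∧
    ∀ x ∈ L.getLast?, ∀ y ∈ L.head?, G.Adj x y

/-- Build a walk from `u` to `v` through intermediate list `L`. -/
def listWalk (G : SimpleGraph V) : ∀ (u v : V) (L : List V),
    List.Chain G.Adj u (L ++ [v]) → G.Walk u v
  | u, v, [], h => SimpleGraph.Walk.cons (by simpa using (List.chain_cons.1 h).1) SimpleGraph.Walk.nil
  | u, v, a :: L, h =>
      SimpleGraph.Walk.cons (List.chain_cons.1 h).1 (listWalk G a v L (List.chain_cons.1 h).2)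

@[simp] lemma listWalk_support (G : SimpleGraph V) :
    ∀ (u v : V) (L : List V) (h : List.Chain G.Adj u (L ++ [v])),
    (listWalk G u v L h).support = u :: (L ++ [v])
  | u, v, [], h => rfl
  | u, v, a :: L, h => by
      simp only [listWalk, SimpleGraph.Walk.support_cons]; exact congrArg (u :: ·) (listWalk_support G a v L _)

/-- An edge back to the start of a long nodup walk cannot be among its edges. -/
lemma not_mem_edges (G : SimpleGraph V) {b u : V} :
    ∀ (q : G.Walk b u), q.support.Nodup → s(u, b) ∈ q.edges → q.length = 1
  | SimpleGraph.Walk.nil, _, he => by simp at he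
  | SimpleGraph.Walk.cons (v := c) h q, hn, he => by
      rw [SimpleGraph.Walk.edges_cons, List.mem_cons] at he
      rcases he with he | he
      · rw [Sym2.eq_iff] at he
        rcases he with ⟨rfl, rfl⟩ | ⟨hu, -⟩
        · exact absurd h (G.irrefl)
        · subst hu
          have hnd : q.support.Nodup := hn.of_cons
          have : q.IsPath := SimpleGraph.Walk.IsPath.mk' hnd
          rw [SimpleGraph.Walk.isPath_iff_eq_nil] at this
          subst this
          rfl
      · exfalso
        have hb : b ∈ q.support := q.snd_mem_support_of_mem_edges he
        have : b ∉ q.support := by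
          have := hn
          rw [SimpleGraph.Walk.support_cons, List.nodup_cons] at this
          exact this.1
        exact this hb



lemma chain_append_singleton {R : V → V → Prop} :
    ∀ {u w : V} {M : List V}, List.Chain R u M →
      R ((u :: M).getLast (by simp)) w → List.Chain R u (M ++ [w])
  | u, w, [], _, h2 => by
      simpa using List.Chain.cons (by simpa using h2) List.Chain.nil
  | u, w, a :: M, h1, h2 => by
      simp only [List.Chain] at h1; rw [List.chain_cons] at h1
      refine List.Chain.cons h1.1 (chain_append_singleton h1.2 ?_)
      rwa [List.getLast_cons (by simp)] at h2

lemma isHamList_hamCycle {G : SimpleGraph V} {L : List V} (hL : IsHamList G L) :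
    ∃ (v : V) (w : G.Walk v v), w.IsHamiltonianCycle := by
  obtain ⟨hnd, hmem, hlen, hchain, hwrap⟩ := hL
  match L, hnd, hmem, hlen, hchain, hwrap with
  | u :: b :: M₂, hnd, hmem, hlen, hchain, hwrap =>
  have hadj_last : G.Adj ((u :: b :: M₂).getLast (by simp)) u := by
    refine hwrap _ ?_ u rfl
    rw [List.getLast?_eq_some_getLast (by simp)]
    rfl
  have hchainM : List.Chain G.Adj u ((b :: M₂) ++ [u]) :=
    chain_append_singleton hchain hadj_last
  have hperm : (u :: b :: M₂).Perm (b :: (M₂ ++ [u])) := by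
    have : (b :: M₂) ++ [u] ~ u :: (b :: M₂) := List.perm_append_singleton u _
    exact this.symm
  refine ⟨u, listWalk G u u (b :: M₂) hchainM, ?_⟩
  have hq : listWalk G u u (b :: M₂) hchainM =
      SimpleGraph.Walk.cons (List.chain_cons.1 hchainM).1
        (listWalk G b u M₂ (List.chain_cons.1 hchainM).2) := rfl
  set q := listWalk G b u M₂ (List.chain_cons.1 hchainM).2 with hqdef
  have hqs : q.support = b :: (M₂ ++ [u]) := listWalk_support G b u M₂ _
  have hqnodup : q.support.Nodup := by rw [hqs]; exact hperm.nodup_iff.1 hnd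
  have hqpath : q.IsPath := SimpleGraph.Walk.IsPath.mk' hqnodup
  have hqlen : q.length ≥ 2 := by
    have := congrArg List.length hqs
    rw [SimpleGraph.Walk.length_support] at this
    simp only [List.length_cons, List.length_append, List.length_singleton] at this hlen ⊢
    omega
  have hne : s(u, b) ∉ q.edges := by
    intro hmem'
    have := not_mem_edges G q hqnodup hmem'
    omega
  rw [hq]
  constructor
  · exact (SimpleGraph.Walk.cons_isCycle_iff q _).2 ⟨hqpath, hne⟩
  · have hnil : ¬ (SimpleGraph.Walk.cons (List.chain_cons.1 hchainM).1 q).Nil :=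
      SimpleGraph.Walk.not_nil_cons
    intro x
    rw [SimpleGraph.Walk.support_tail_of_not_nil _ hnil]
    have : (SimpleGraph.Walk.cons (List.chain_cons.1 hchainM).1 q).support.tail
        = b :: (M₂ ++ [u]) := by
      rw [SimpleGraph.Walk.support_cons, List.tail_cons, hqs]
    rw [this]
    exact List.count_eq_one_of_mem (hperm.nodup_iff.1 hnd)
      (hperm.mem_iff.1 (hmem x))

/-- From a Hamiltonian cycle extract a cyclic Hamiltonian list. -/
lemma hamCycle_isHamList {G : SimpleGraph V} {a : V} {w : G.Walk a a}
    (hw : w.IsHamiltonianCycle) : ∃ L, IsHamList G L := by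
  refine ⟨w.support.tail, ?_, ?_, ?_, ?_, ?_⟩
  · exact hw.isCycle.2
  · intro x
    rw [← SimpleGraph.Walk.support_tail_of_not_nil _ hw.isCycle.not_nil]
    exact hw.isHamiltonian_tail.mem_support x
  · have h1 : w.support.length = w.length + 1 := SimpleGraph.Walk.length_support w
    have h2 := hw.isCycle.three_le_length
    rw [List.length_tail, h1]
    omega
  · have := w.isChain_adj_support
    exact this.tail
  · intro x hx y hy
    have hlast : w.support.getLast (by simp) = a := SimpleGraph.Walk.getLast_support w
    have hnn : w.support.tail ≠ [] := by
      have h2 := hw.isCycle.three_le_length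
      have h1 : w.support.length = w.length + 1 := SimpleGraph.Walk.length_support w
      intro h
      have h3 := congrArg List.length h
      rw [List.length_tail] at h3
      simp only [List.length_nil] at h3
      omega
    rw [List.getLast?_eq_some_getLast hnn] at hx
    simp only [Option.mem_def, Option.some_inj] at hx
    have hgl : w.support.tail.getLast hnn = w.support.getLast (by simp) :=
      List.getLast_tail hnn
    have hxa : x = a := by rw [← hx, hgl, hlast]
    subst hxa
    have hsc : w.support = x :: w.support.tail := SimpleGraph.Walk.support_eq_cons w
    have hch : List.Chain' G.Adj (x :: w.support.tail) := hsc ▸ w.isChain_adj_support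
    exact hch.rel_head? hy


lemma head?_eq_zero {α : Type*} (l : List α) : l.head? = l[0]? := by cases l <;> simp

lemma getLast?_eq_len {α : Type*} (l : List α) (h : l ≠ []) : l.getLast? = l[l.length-1]? := by
  rw [List.getLast?_eq_some_getLast h,
    List.getElem?_eq_getElem (by have := List.length_pos_iff.2 h; omega)]
  simp [List.getLast_eq_getElem]

/-- The rotation construction: a Hamiltonian path plus crossing chords gives a
Hamiltonian cyclic list. -/
lemma rotation {G : SimpleGraph V} {L : List V} (hnd : L.Nodup) (hmem : ∀ x, x ∈ L)
    (hlen : 3 ≤ L.length) (hchain : L.Chain' G.Adj) {i : ℕ} (hi1 : 1 ≤ i)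
    (hi : i + 1 < L.length)
    (hadj1 : G.Adj (L[0]'(by omega)) (L[i+1]'hi))
    (hadj2 : G.Adj (L[i]'(by omega)) (L[L.length-1]'(by omega))) :
    IsHamList G ((L.take (i+1)).reverse ++ L.drop (i+1)) := by
  have hperm : ((L.take (i+1)).reverse ++ L.drop (i+1)).Perm L := by
    calc (L.take (i+1)).reverse ++ L.drop (i+1)
        ~ L.take (i+1) ++ L.drop (i+1) := ((L.take (i+1)).reverse_perm).append_right _
      _ = L := List.take_append_drop _ _
  have htne : (L.take (i+1)).reverse ≠ [] := by
    rw [ne_eq, List.reverse_eq_nil_iff, ← List.length_eq_zero_iff, List.length_take]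
    omega
  have hdne : L.drop (i+1) ≠ [] := by
    simp only [ne_eq, ← List.length_eq_zero_iff, List.length_drop]
    omega
  refine ⟨hperm.nodup_iff.2 hnd, fun x => hperm.mem_iff.2 (hmem x),
    by rw [hperm.length_eq]; exact hlen, ?_, ?_⟩
  · rw [List.Chain', List.isChain_append]
    refine ⟨?_, hchain.drop _, ?_⟩
    · rw [List.isChain_reverse]
      exact (hchain.take _).imp fun a b h => h.symm
    · intro x hx y hy
      rw [List.getLast?_reverse, head?_eq_zero, List.getElem?_take] at hx
      · simp only [if_pos (by omega : 0 < i+1),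
          List.getElem?_eq_getElem (by omega : 0 < L.length), Option.mem_def,
          Option.some_inj] at hx
        rw [head?_eq_zero, List.getElem?_drop, Nat.add_zero,
          List.getElem?_eq_getElem hi] at hy
        simp only [Option.mem_def, Option.some_inj] at hy
        subst hx hy
        exact hadj1
  · intro x hx y hy
    rw [List.getLast?_append_of_ne_nil _ hdne, getLast?_eq_len _ hdne] at hx
    rw [List.length_drop, List.getElem?_drop] at hx
    have hix : i + 1 + (L.length - (i+1) - 1) = L.length - 1 := by omega
    rw [hix, List.getElem?_eq_getElem (by omega)] at hx
    simp only [Option.mem_def, Option.some_inj] at hx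
    rw [List.head?_append_of_ne_nil _ htne, List.head?_reverse,
      getLast?_eq_len _ (by simp only [ne_eq, ← List.length_eq_zero_iff, List.length_take]; omega),
      List.length_take] at hy
    have : min (i+1) L.length - 1 = i := by omega
    rw [this, List.getElem?_take] at hy
    simp only [if_pos (by omega : i < i+1),
      List.getElem?_eq_getElem (by omega : i < L.length), Option.mem_def,
      Option.some_inj] at hy
    subst hx hy
    exact hadj2.symm


lemma getD_eq {α : Type*} (l : List α) (i : ℕ) (h : i < l.length) (d : α) :
    l.getD i d = l[i] := by
  rw [List.getD_eq_getElem?_getD, List.getElem?_eq_getElem h]; rfl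

open scoped Classical in
lemma vertexDegree_eq (G : SimpleGraph V) (x : V) :
    vertexDegree G x = (univ.filter fun y => G.Adj x y).card := by
  rw [vertexDegree, ← Set.ncard_coe_finset]
  congr 1
  ext y
  simp [SimpleGraph.neighborSet]

lemma vertexDegree_mono {G G' : SimpleGraph V} (h : G ≤ G') (x : V) :
    vertexDegree G x ≤ vertexDegree G' x :=
  Set.ncard_le_ncard (fun y hy => h hy) (Set.toFinite _)

open scoped Classical in
lemma deg_sum_le {G : SimpleGraph V} (hno : ¬ ∃ L, IsHamList G L)
    {L : List V} (hnd : L.Nodup) (hmem : ∀ x, x ∈ L) (hlen : 3 ≤ L.length)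
    (hchain : L.Chain' G.Adj) {u v : V}
    (hu : L.head? = some u) (hv : L.getLast? = some v) (hnadj : ¬ G.Adj u v) :
    vertexDegree G u + vertexDegree G v + 1 ≤ Fintype.card V := by
  set n := L.length with hn
  have hne : L ≠ [] := by rw [← List.length_pos_iff_ne_nil]; omega
  have hcard : n = Fintype.card V := by
    rw [hn, ← List.toFinset_card_of_nodup hnd, ← Finset.card_univ]
    congr 1
    exact Finset.eq_univ_iff_forall.2 fun x => List.mem_toFinset.2 (hmem x)
  have hu0 : L[0]'(by omega) = u := by
    rw [head?_eq_zero, List.getElem?_eq_getElem (by omega)] at hu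
    simpa using hu
  have hvlast : L[n-1]'(by omega) = v := by
    rw [getLast?_eq_len _ hne, List.getElem?_eq_getElem (by omega)] at hv
    simpa using hv
  set S : Finset ℕ := (Finset.range (n-1)).filter (fun j => G.Adj u (L.getD (j+1) u)) with hS
  set T : Finset ℕ := (Finset.range (n-1)).filter (fun j => G.Adj (L.getD j u) v) with hT
  have hScard : S.card = vertexDegree G u := by
    rw [vertexDegree_eq]
    apply Finset.card_bij (fun j _ => L.getD (j+1) u)
    · intro j hj
      rw [hS, Finset.mem_filter] at hj
      rw [Finset.mem_filter]
      exact ⟨Finset.mem_univ _, hj.2⟩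
    · intro i hi j hj hij
      rw [hS, Finset.mem_filter, Finset.mem_range] at hi hj
      have hij' : L[i+1]'(by omega) = L[j+1]'(by omega) := by
        rw [← getD_eq L (i+1) (by omega) u, ← getD_eq L (j+1) (by omega) u]
        exact hij
      have := hnd.getElem_inj_iff.1 hij'
      omega
    · intro z hz
      rw [Finset.mem_filter] at hz
      obtain ⟨k, hk, hkz⟩ := List.mem_iff_getElem.1 (hmem z)
      have hk0 : k ≠ 0 := by
        intro h
        subst h
        exact G.ne_of_adj hz.2 (by rw [← hu0, hkz])
      refine ⟨k-1, ?_, ?_⟩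
      · rw [hS, Finset.mem_filter, Finset.mem_range]
        constructor
        · omega
        · have hkk : k - 1 + 1 = k := by omega
          rw [hkk, getD_eq _ _ (by omega), hkz]
          exact hz.2
      · have hkk : k - 1 + 1 = k := by omega
        rw [hkk, getD_eq _ _ (by omega), hkz]
  have hTcard : T.card = vertexDegree G v := by
    rw [vertexDegree_eq]
    apply Finset.card_bij (fun j _ => L.getD j u)
    · intro j hj
      rw [hT, Finset.mem_filter] at hj
      simp only [Finset.mem_filter, Finset.mem_univ, true_and]
      exact hj.2.symm
    · intro i hi j hj hij
      rw [hT, Finset.mem_filter, Finset.mem_range] at hi hj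
      have hij' : L[i]'(by omega) = L[j]'(by omega) := by
        rw [← getD_eq L i (by omega) u, ← getD_eq L j (by omega) u]
        exact hij
      exact hnd.getElem_inj_iff.1 hij' 
    · intro z hz
      rw [Finset.mem_filter] at hz
      obtain ⟨k, hk, hkz⟩ := List.mem_iff_getElem.1 (hmem z)
      have hkn : k ≠ n - 1 := by
        intro h
        subst h
        exact G.ne_of_adj hz.2 (by rw [← hvlast, hkz])
      refine ⟨k, ?_, ?_⟩
      · rw [hT, Finset.mem_filter, Finset.mem_range]
        refine ⟨by omega, ?_⟩
        rw [getD_eq _ _ (by omega), hkz]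
        exact hz.2.symm
      · rw [getD_eq _ _ (by omega), hkz]
  have hdisj : Disjoint S T := by
    rw [Finset.disjoint_left]
    intro j hjS hjT
    rw [hS, Finset.mem_filter, Finset.mem_range] at hjS
    rw [hT, Finset.mem_filter] at hjT
    have hj1 : G.Adj u (L[j+1]'(by omega)) := by
      rw [getD_eq _ _ (by omega)] at hjS; exact hjS.2
    have hj2 : G.Adj (L[j]'(by omega)) v := by
      rw [getD_eq _ _ (by omega)] at hjT; exact hjT.2
    rcases Nat.eq_zero_or_pos j with hj0 | hjpos
    · subst hj0
      rw [hu0] at hj2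
      exact hnadj hj2
    · refine hno ⟨_, rotation hnd hmem hlen hchain (i := j) hjpos (by omega) ?_ ?_⟩
      · rw [hu0]; exact hj1
      · have hvl : L[L.length - 1]'(by omega) = v := hvlast
        rw [hvl]; exact hj2
  have hunion : (S ∪ T).card = S.card + T.card := Finset.card_union_of_disjoint hdisj
  have hsub : S ∪ T ⊆ Finset.range (n-1) := by
    rw [hS, hT]
    exact Finset.union_subset (Finset.filter_subset _ _) (Finset.filter_subset _ _)
  have := Finset.card_le_card hsub
  rw [hunion, Finset.card_range, hScard, hTcard] at this
  omega


lemma getElem_drop' {α : Type*} (l : List α) (i j : ℕ) (h : j < (l.drop i).length) :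
    (l.drop i)[j] = l[i+j]'(by rw [List.length_drop] at h; omega) := by
  rw [← Option.some_inj, ← List.getElem?_eq_getElem, ← List.getElem?_eq_getElem,
    List.getElem?_drop]

lemma getElem_take' {α : Type*} (l : List α) (i j : ℕ) (h : j < (l.take i).length) :
    (l.take i)[j] = l[j]'(by rw [List.length_take] at h; omega) := by
  rw [← Option.some_inj, ← List.getElem?_eq_getElem, ← List.getElem?_eq_getElem,
    List.getElem?_take]
  simp [(by rw [List.length_take] at h; omega : j < i)]

lemma chain'_iff_getElem' {α : Type*} {R : α → α → Prop} (l : List α) : l.Chain' R ↔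
    ∀ (i : ℕ) (h : i + 1 < l.length), R (l[i]'(by omega)) (l[i+1]'h) := by
  rw [List.Chain', List.isChain_iff_getElem]

/-- Decomposition: a Hamiltonian cyclic list for `G ⊔ edge u v` yields either one for `G`,
or a Hamiltonian path list for `G` whose endpoints are `u` and `v` (in some order). -/
lemma decompose {G : SimpleGraph V} {u v : V} (huv : u ≠ v) {L : List V}
    (hL : IsHamList (G ⊔ SimpleGraph.edge u v) L) :
    (∃ L', IsHamList G L') ∨
    ∃ M : List V, M.Nodup ∧ (∀ x, x ∈ M) ∧ 3 ≤ M.length ∧ M.Chain' G.Adj ∧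
      ((M.head? = some u ∧ M.getLast? = some v) ∨ (M.head? = some v ∧ M.getLast? = some u)) := by
  obtain ⟨hnd, hmem, hlen, hchain, hwrap⟩ := hL
  have hne : L ≠ [] := by rw [← List.length_pos_iff_ne_nil]; omega
  have hadj : ∀ x y : V, (G ⊔ SimpleGraph.edge u v).Adj x y →
      G.Adj x y ∨ (x = u ∧ y = v) ∨ (x = v ∧ y = u) := by
    intro x y hxy
    rw [SimpleGraph.sup_adj, SimpleGraph.edge_adj] at hxy
    tauto
  have hchain' := (chain'_iff_getElem' L).1 hchain
  by_cases h1 : L.Chain' G.Adj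
  · -- all interior pairs G-adjacent; check the wrap pair
    have hwl : L.getLast? = some (L.getLast hne) := List.getLast?_eq_some_getLast hne
    have hhd : L.head? = some (L.head hne) := List.head?_eq_head hne
    have hw := hwrap _ hwl _ hhd
    rcases hadj _ _ hw with hGw | hcase
    · left
      exact ⟨L, hnd, hmem, hlen, h1, by
        intro x hx y hy
        rw [hwl] at hx; rw [hhd] at hy
        simp only [Option.mem_def, Option.some_inj] at hx hy
        subst hx; subst hy; exact hGw⟩
    · right
      refine ⟨L, hnd, hmem, hlen, h1, ?_⟩
      rcases hcase with ⟨hlu, hhv⟩ | ⟨hlv, hhu⟩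
      · right
        rw [hhd, hwl, hhv, hlu]
        exact ⟨rfl, rfl⟩
      · left
        rw [hhd, hwl, hhu, hlv]
        exact ⟨rfl, rfl⟩
  · -- some interior pair is the new edge
    rw [chain'_iff_getElem' L] at h1
    push_neg at h1
    obtain ⟨i, hi, hni⟩ := h1
    have hGi := hchain' i hi
    have hpair : (L[i]'(by omega) = u ∧ L[i+1]'hi = v) ∨
        (L[i]'(by omega) = v ∧ L[i+1]'hi = u) := by
      rcases hadj _ _ hGi with hG | hc
      · exact absurd hG hni
      · exact hc
    -- positions of u and v are exactly i and i+1 (in some order)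
    have hinj : ∀ (j k : ℕ) (hj : j < L.length) (hk : k < L.length),
        L[j]'hj = L[k]'hk → j = k := fun j k hj hk h => hnd.getElem_inj_iff.1 h
    have hkey : ∀ (j : ℕ) (hj : j + 1 < L.length), j ≠ i →
        G.Adj (L[j]'(by omega)) (L[j+1]'hj) := by
      intro j hj hji
      rcases hadj _ _ (hchain' j hj) with hG | ⟨hju, hjv⟩ | ⟨hjv, hju⟩
      · exact hG
      · exfalso
        rcases hpair with ⟨hu', hv'⟩ | ⟨hu', hv'⟩
        · have : j = i := hinj _ _ (by omega) (by omega) (hju.trans hu'.symm)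
          exact hji this
        · have h2 : j = i + 1 := hinj _ _ (by omega) (by omega) (hju.trans hv'.symm)
          have h3 : j + 1 = i := hinj _ _ (by omega) (by omega) (hjv.trans hu'.symm)
          omega
      · exfalso
        rcases hpair with ⟨hu', hv'⟩ | ⟨hu', hv'⟩
        · have h2 : j = i + 1 := hinj _ _ (by omega) (by omega) (hjv.trans hv'.symm)
          have h3 : j + 1 = i := hinj _ _ (by omega) (by omega) (hju.trans hu'.symm)
          omega
        · have : j = i := hinj _ _ (by omega) (by omega) (hjv.trans hu'.symm)
          exact hji this
    have hwrapG : G.Adj (L[L.length - 1]'(by omega)) (L[0]'(by omega)) := by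
      have hwl : L.getLast? = some (L[L.length - 1]'(by omega)) := by
        rw [getLast?_eq_len _ hne, List.getElem?_eq_getElem (by omega)]
      have hhd : L.head? = some (L[0]'(by omega)) := by
        rw [head?_eq_zero, List.getElem?_eq_getElem (by omega)]
      have hw := hwrap _ hwl _ hhd
      rcases hadj _ _ hw with hG | ⟨hju, hjv⟩ | ⟨hjv, hju⟩
      · exact hG
      · exfalso
        rcases hpair with ⟨hu', hv'⟩ | ⟨hu', hv'⟩
        · have h2 : L.length - 1 = i := hinj _ _ (by omega) (by omega) (hju.trans hu'.symm)
          omega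
        · have h2 : L.length - 1 = i + 1 := hinj _ _ (by omega) (by omega) (hju.trans hv'.symm)
          have h3 : 0 = i := (hinj _ _ (by omega) (by omega) (hjv.trans hu'.symm))
          omega
      · exfalso
        rcases hpair with ⟨hu', hv'⟩ | ⟨hu', hv'⟩
        · have h2 : L.length - 1 = i + 1 := hinj _ _ (by omega) (by omega) (hjv.trans hv'.symm)
          have h3 : 0 = i := hinj _ _ (by omega) (by omega) (hju.trans hu'.symm)
          omega
        · have h2 : L.length - 1 = i := hinj _ _ (by omega) (by omega) (hjv.trans hu'.symm)
          omega
    right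
    set M : List V := L.drop (i+1) ++ L.take (i+1) with hM
    have hdne : L.drop (i+1) ≠ [] := by
      rw [ne_eq, ← List.length_eq_zero_iff, List.length_drop]; omega
    have htne : L.take (i+1) ≠ [] := by
      rw [ne_eq, ← List.length_eq_zero_iff, List.length_take]; omega
    have hperm : M.Perm L := by
      rw [hM]
      calc L.drop (i+1) ++ L.take (i+1) ~ L.take (i+1) ++ L.drop (i+1) := List.perm_append_comm
        _ = L := List.take_append_drop _ _
    have hchainM : M.Chain' G.Adj := by
      rw [hM, List.Chain', List.isChain_append]
      refine ⟨?_, ?_, ?_⟩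
      · rw [← List.Chain', chain'_iff_getElem']
        intro j hj
        rw [List.length_drop] at hj
        rw [getElem_drop', getElem_drop']
        exact hkey (i+1+j) (by omega) (by omega)
      · rw [← List.Chain', chain'_iff_getElem']
        intro j hj
        rw [List.length_take] at hj
        rw [getElem_take', getElem_take']
        exact hkey j (by omega) (by omega)
      · intro x hx y hy
        rw [getLast?_eq_len _ hdne, List.length_drop, List.getElem?_drop] at hx
        have heq : i + 1 + (L.length - (i+1) - 1) = L.length - 1 := by omega
        rw [heq, List.getElem?_eq_getElem (by omega)] at hx
        rw [head?_eq_zero, List.getElem?_take] at hy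
        rw [if_pos (by omega : 0 < i + 1), List.getElem?_eq_getElem (by omega)] at hy
        simp only [Option.mem_def, Option.some_inj] at hx hy
        subst hx; subst hy
        exact hwrapG
    refine ⟨M, hperm.nodup_iff.2 hnd, fun x => hperm.mem_iff.2 (hmem x),
      by rw [hperm.length_eq]; exact hlen, hchainM, ?_⟩
    have hhM : M.head? = some (L[i+1]'hi) := by
      rw [hM, List.head?_append_of_ne_nil _ hdne, head?_eq_zero, List.getElem?_drop]
      simp only [Nat.add_zero]
      rw [List.getElem?_eq_getElem hi]
    have hlM : M.getLast? = some (L[i]'(by omega)) := by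
      rw [hM, List.getLast?_append_of_ne_nil _ htne, getLast?_eq_len _ htne,
        List.length_take]
      have heq : min (i+1) L.length - 1 = i := by omega
      rw [heq, List.getElem?_take, if_pos (by omega : i < i + 1),
        List.getElem?_eq_getElem (by omega)]
    rcases hpair with ⟨hu', hv'⟩ | ⟨hu', hv'⟩
    · right
      rw [hhM, hlM, hu', hv']
      exact ⟨rfl, rfl⟩
    · left
      rw [hhM, hlM, hu', hv']
      exact ⟨rfl, rfl⟩


open scoped Classical in
/-- The counting form of Pósa's condition. -/
def PosaCond (G : SimpleGraph V) : Prop :=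
  ∀ k : ℕ, 1 ≤ k → 2 * k < Fintype.card V →
    (univ.filter fun x => vertexDegree G x ≤ k).card < k

open scoped Classical in
lemma posaCond_mono {G G' : SimpleGraph V} (h : G ≤ G') (hP : PosaCond G) : PosaCond G' := by
  intro k hk1 hk2
  refine lt_of_le_of_lt (Finset.card_le_card ?_) (hP k hk1 hk2)
  intro x hx
  rw [Finset.mem_filter] at hx ⊢
  exact ⟨hx.1, le_trans (vertexDegree_mono h x) hx.2⟩

open scoped Classical in
lemma complete_hamList {G : SimpleGraph V} (hm : 3 ≤ Fintype.card V)
    (hcomp : ∀ x y : V, x ≠ y → G.Adj x y) : ∃ L, IsHamList G L := by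
  set l := (univ : Finset V).toList with hl
  have hnd : l.Nodup := Finset.nodup_toList _
  have hml : ∀ x, x ∈ l := fun x => by rw [hl, Finset.mem_toList]; exact Finset.mem_univ x
  have hlen : 3 ≤ l.length := by
    rw [hl, Finset.length_toList, Finset.card_univ]; exact hm
  have hne : l ≠ [] := by rw [← List.length_pos_iff_ne_nil]; omega
  refine ⟨l, hnd, hml, hlen, ?_, ?_⟩
  · exact (hnd.imp (fun hab => hcomp _ _ hab)).isChain
  · intro x hx y hy
    rw [getLast?_eq_len _ hne, List.getElem?_eq_getElem (by omega)] at hx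
    rw [head?_eq_zero, List.getElem?_eq_getElem (by omega)] at hy
    simp only [Option.mem_def, Option.some_inj] at hx hy
    subst hx; subst hy
    refine hcomp _ _ fun hcon => ?_
    have := hnd.getElem_inj_iff.1 hcon
    omega

open scoped Classical in
lemma no_counting {G : SimpleGraph V} (hm : 3 ≤ Fintype.card V) (hP : PosaCond G)
    {u v : V} (huv : u ≠ v) (hnadj : ¬ G.Adj u v)
    (hmax : ∀ x y : V, x ≠ y → ¬G.Adj x y →
      vertexDegree G x + vertexDegree G y ≤ vertexDegree G u + vertexDegree G v)
    (hduv : vertexDegree G u ≤ vertexDegree G v)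
    (hsum : vertexDegree G u + vertexDegree G v + 1 ≤ Fintype.card V) : False := by
  set k := vertexDegree G u with hk
  set n := Fintype.card V with hn
  have hk2 : 2 ≤ k := by
    by_contra hlt
    push_neg at hlt
    have h1 := hP 1 le_rfl (by omega)
    have hmem : u ∈ univ.filter fun x => vertexDegree G x ≤ 1 := by
      rw [Finset.mem_filter]
      exact ⟨Finset.mem_univ _, by omega⟩
    have := Finset.card_pos.2 ⟨u, hmem⟩
    omega
  have hPk := hP k (by omega) (by omega)
  set A := univ.filter (fun w => w ≠ v ∧ ¬ G.Adj w v) with hA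
  have hcover : (univ : Finset V) ⊆ A ∪ (univ.filter fun w => G.Adj v w) ∪ {v} := by
    intro x _
    simp only [Finset.mem_union, hA, Finset.mem_filter, Finset.mem_univ, true_and,
      Finset.mem_singleton]
    by_cases hxv : x = v
    · tauto
    · by_cases hxa : G.Adj x v
      · exact Or.inl (Or.inr hxa.symm)
      · tauto
  have hA_card : n ≤ A.card + vertexDegree G v + 1 := by
    have h1 := Finset.card_le_card hcover
    have h2 := Finset.card_union_le (A ∪ (univ.filter fun w => G.Adj v w)) ({v} : Finset V)
    have h3 := Finset.card_union_le A (univ.filter fun w => G.Adj v w)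
    rw [Finset.card_univ, ← hn] at h1
    rw [vertexDegree_eq]
    simp only [Finset.card_singleton] at h2
    omega
  have hsubA : A ⊆ univ.filter fun x => vertexDegree G x ≤ k := by
    intro w hw
    rw [hA, Finset.mem_filter] at hw
    rw [Finset.mem_filter]
    refine ⟨Finset.mem_univ _, ?_⟩
    have := hmax w v hw.2.1 hw.2.2
    omega
  have := Finset.card_le_card hsubA
  omega

open scoped Classical in
lemma posa_aux : ∀ (m : ℕ) (G : SimpleGraph V),
    ((univ ×ˢ univ).filter fun p : V × V => p.1 ≠ p.2 ∧ ¬ G.Adj p.1 p.2).card ≤ m →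
    3 ≤ Fintype.card V → PosaCond G → ∃ L, IsHamList G L := by
  intro m
  induction m with
  | zero =>
      intro G hc hm hP
      refine complete_hamList hm fun x y hxy => ?_
      by_contra hnadj
      have hmem : (x, y) ∈ (univ ×ˢ univ).filter fun p : V × V => p.1 ≠ p.2 ∧ ¬ G.Adj p.1 p.2 := by
        rw [Finset.mem_filter]
        exact ⟨Finset.mem_product.2 ⟨Finset.mem_univ _, Finset.mem_univ _⟩, hxy, hnadj⟩
      have := Finset.card_pos.2 ⟨(x, y), hmem⟩
      omega
  | succ m ih =>
      intro G hc hm hP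
      by_cases hcomp : ∀ x y : V, x ≠ y → G.Adj x y
      · exact complete_hamList hm hcomp
      by_contra hno
      set Q := (univ ×ˢ univ).filter fun p : V × V => p.1 ≠ p.2 ∧ ¬ G.Adj p.1 p.2 with hQ
      have hQne : Q.Nonempty := by
        push_neg at hcomp
        obtain ⟨x, y, hxy, hnadj⟩ := hcomp
        exact ⟨(x, y), by
          rw [hQ, Finset.mem_filter]
          exact ⟨Finset.mem_product.2 ⟨Finset.mem_univ _, Finset.mem_univ _⟩, hxy, hnadj⟩⟩
      obtain ⟨p, hpQ, hpmax⟩ := Q.exists_max_image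
        (fun p => vertexDegree G p.1 + vertexDegree G p.2) hQne
      rw [hQ, Finset.mem_filter] at hpQ
      obtain ⟨-, hab, hnadjab⟩ := hpQ
      -- order the pair so that the first has smaller degree
      obtain ⟨u, v, huv, hnadj, hduv, hmax⟩ :
          ∃ u v : V, u ≠ v ∧ ¬ G.Adj u v ∧ vertexDegree G u ≤ vertexDegree G v ∧
            ∀ x y : V, x ≠ y → ¬G.Adj x y →
              vertexDegree G x + vertexDegree G y ≤ vertexDegree G u + vertexDegree G v := by
        have hmax' : ∀ x y : V, x ≠ y → ¬G.Adj x y →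
            vertexDegree G x + vertexDegree G y ≤ vertexDegree G p.1 + vertexDegree G p.2 := by
          intro x y hxy hnadj
          exact hpmax (x, y) (by
            rw [hQ, Finset.mem_filter]
            exact ⟨Finset.mem_product.2 ⟨Finset.mem_univ _, Finset.mem_univ _⟩, hxy, hnadj⟩)
        rcases le_total (vertexDegree G p.1) (vertexDegree G p.2) with hle | hle
        · exact ⟨p.1, p.2, hab, hnadjab, hle, hmax'⟩
        · refine ⟨p.2, p.1, hab.symm, fun h => hnadjab h.symm, hle, fun x y h1 h2 => ?_⟩
          rw [Nat.add_comm (vertexDegree G p.2)]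
          exact hmax' x y h1 h2
      set G' := G ⊔ SimpleGraph.edge u v with hG'
      have hGle : G ≤ G' := le_sup_left
      have hQ'sub : ((univ ×ˢ univ).filter fun p : V × V => p.1 ≠ p.2 ∧ ¬ G'.Adj p.1 p.2)
          ⊆ Q.erase (u, v) := by
        intro q hq
        rw [Finset.mem_filter] at hq
        rw [Finset.mem_erase, hQ, Finset.mem_filter]
        refine ⟨?_, hq.1, hq.2.1, fun h => hq.2.2 (hGle h)⟩
        intro h
        subst h
        exact hq.2.2 (by
          rw [hG', SimpleGraph.sup_adj, SimpleGraph.edge_adj]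
          exact Or.inr ⟨Or.inl ⟨rfl, rfl⟩, huv⟩)
      have hQmem : (u, v) ∈ Q := by
        rw [hQ, Finset.mem_filter]
        exact ⟨Finset.mem_product.2 ⟨Finset.mem_univ _, Finset.mem_univ _⟩, huv, hnadj⟩
      have hQ'card : ((univ ×ˢ univ).filter fun p : V × V =>
          p.1 ≠ p.2 ∧ ¬ G'.Adj p.1 p.2).card ≤ m := by
        have h1 := Finset.card_le_card hQ'sub
        rw [Finset.card_erase_of_mem hQmem] at h1
        have h2 := Finset.card_pos.2 ⟨(u, v), hQmem⟩
        omega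
      obtain ⟨L, hL⟩ := ih G' (by convert hQ'card using 2; exact Finset.filter_congr_decidable _ _ _) hm (posaCond_mono hGle hP)
      rcases decompose huv hL with ⟨L', hL'⟩ | ⟨M, hMnd, hMmem, hMlen, hMchain, hMends⟩
      · exact hno ⟨L', hL'⟩
      · have hsum : vertexDegree G u + vertexDegree G v + 1 ≤ Fintype.card V := by
          rcases hMends with ⟨hh, hl⟩ | ⟨hh, hl⟩
          · exact deg_sum_le hno hMnd hMmem hMlen hMchain hh hl hnadj
          · have := deg_sum_le hno hMnd hMmem hMlen hMchain hh hl
              (fun h => hnadj h.symm)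
            omega
        exact no_counting hm hP huv hnadj hmax hduv hsum

open scoped Classical in
lemma posaCond_of_sorted (Γ : SimpleGraph V) (hm : 3 ≤ Fintype.card V)
    (e : Fin (Fintype.card V) ≃ V)
    (hmono : Monotone fun i => vertexDegree Γ (e i))
    (h : ∀ k : ℕ, ∀ _ : 1 ≤ k, ∀ _ : 2 * k < Fintype.card V,
      vertexDegree Γ (e ⟨k - 1, lt_of_le_of_lt (Nat.sub_le k 1) (by omega)⟩) ≥ k + 1) : PosaCond Γ := by
  intro k hk1 hk2
  by_contra hge
  push_neg at hge
  set F' := (univ : Finset (Fin (Fintype.card V))).filter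
    (fun i => vertexDegree Γ (e i) ≤ k) with hF'
  have hcards : (univ.filter fun x => vertexDegree Γ x ≤ k).card = F'.card := by
    apply Finset.card_bij (fun x _ => e.symm x)
    · intro x hx
      rw [Finset.mem_filter] at hx ⊢
      refine ⟨Finset.mem_univ _, ?_⟩
      rw [e.apply_symm_apply]
      exact hx.2
    · intro x hx y hy hxy
      exact e.symm.injective hxy
    · intro i hi
      rw [hF', Finset.mem_filter] at hi
      exact ⟨e i, by
        rw [Finset.mem_filter]
        exact ⟨Finset.mem_univ _, hi.2⟩, e.symm_apply_apply i⟩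
  rw [hcards] at hge
  have hkm : (⟨k - 1, by omega⟩ : Fin (Fintype.card V)) ∈ F' := by
    by_contra hnm
    rw [hF', Finset.mem_filter] at hnm
    push_neg at hnm
    have hbig := hnm (Finset.mem_univ _)
    have hsmall : ∀ i ∈ F', (i : Fin (Fintype.card V)).val < k - 1 := by
      intro i hi
      rw [hF', Finset.mem_filter] at hi
      by_contra hge'
      push_neg at hge'
      have : (⟨k - 1, by omega⟩ : Fin (Fintype.card V)) ≤ i := hge'
      have := hmono this
      simp only at this
      omega
    have : F'.card ≤ (Finset.range (k-1)).card := by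
      apply Finset.card_le_card_of_injOn (fun i => i.val)
      · intro i hi
        rw [Finset.mem_coe, Finset.mem_range]
        exact hsmall i hi
      · intro i _ j _ hij
        exact Fin.val_injective hij
    rw [Finset.card_range] at this
    omega
  rw [hF', Finset.mem_filter] at hkm
  have := h k hk1 hk2
  omega

end PosaAux

/-- Pósa's criterion: if the degrees `d_1 ≤ ⋯ ≤ d_m` of a finite
graph on `m ≥ 3` vertices satisfy `d_k ≥ k + 1` for all `1 ≤ k < m/2`, then the
graph contains a Hamiltonian cycle. -/
theorem stmt_5 {V : Type*} [Fintype V] [DecidableEq V] (Γ : SimpleGraph V)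
    (hm : 3 ≤ Fintype.card V)
    (e : Fin (Fintype.card V) ≃ V)
    (hmono : Monotone fun i => vertexDegree Γ (e i))
    (h : ∀ k : ℕ, ∀ _ : 1 ≤ k, ∀ _ : 2 * k < Fintype.card V,
      vertexDegree Γ (e ⟨k - 1, by omega⟩) ≥ k + 1) :
    ∃ (v : V) (w : Γ.Walk v v), w.IsHamiltonianCycle := by
  classical
  have hP := PosaAux.posaCond_of_sorted Γ hm e hmono h
  obtain ⟨L, hL⟩ := PosaAux.posa_aux _ Γ le_rfl hm hP
  exact PosaAux.isHamList_hamCycle hL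
end

section
/- A finite graph Γ contains a Hamiltonian cycle if and only if its closure cl(Γ) contains a Hamiltonian cycle. -/
/-- The closure of a graph `Γ` with `m` vertices: `x`, `y` are joined iff they
are joined in `Γ` or `d(Γ,x) + d(Γ,y) ≥ m`. -/
def graphClosure {V : Type*} [Fintype V] (Γ : SimpleGraph V) : SimpleGraph V where
  Adj x y := x ≠ y ∧
    (Γ.Adj x y ∨ Fintype.card V ≤ vertexDegree Γ x + vertexDegree Γ y)
  symm := by
    constructor
    rintro x y ⟨hxy, h⟩
    refine ⟨hxy.symm, ?_⟩
    rcases h with h | h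
    · exact Or.inl h.symm
    · omega
  loopless := by constructor; rintro x ⟨hxx, -⟩; exact hxx rfl

open SimpleGraph Walk List

section Aux

variable {V : Type*} [Fintype V] [DecidableEq V]

lemma vertexDegree_eq_degree (G : SimpleGraph V) [DecidableRel G.Adj] (x : V) :
    vertexDegree G x = G.degree x := by
  rw [vertexDegree, Set.ncard_eq_toFinset_card']
  congr 1

lemma vertexDegree_mono {G H : SimpleGraph V} (h : G ≤ H) (x : V) :
    vertexDegree G x ≤ vertexDegree H x :=
  Set.ncard_le_ncard (fun v hv => h hv) (Set.toFinite _)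

lemma card_filter_darts_adj {G : SimpleGraph V} [DecidableRel G.Adj] {x y : V}
    (p : G.Walk x y) (hp : p.IsPath) (hall : ∀ z, z ∈ p.support) :
    (p.darts.toFinset.filter (fun d => G.Adj x d.snd)).card = G.degree x := by
  apply Finset.card_bij (fun d _ => d.snd)
  · intro d hd
    simp only [Finset.mem_filter, List.mem_toFinset] at hd
    simpa using hd.2
  · intro d1 h1 d2 h2 h
    simp only [Finset.mem_filter, List.mem_toFinset] at h1 h2
    refine List.inj_on_of_nodup_map (f := fun d : G.Dart => d.snd) ?_ h1.1 h2.1 h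
    rw [map_snd_darts]
    exact hp.support_nodup.tail
  · intro v hv
    have hadj : G.Adj x v := by simpa using hv
    have hv' : v ∈ p.support.tail := by
      have := hall v
      rw [support_eq_cons] at this
      rcases List.mem_cons.mp this with h | h
      · exact absurd h.symm hadj.ne
      · exact h
    rw [← map_snd_darts] at hv'
    obtain ⟨d, hd, rfl⟩ := List.mem_map.mp hv'
    exact ⟨d, by simp [Finset.mem_filter, hd, hadj], rfl⟩

/-- The rotation (pigeonhole) step: a Hamiltonian path between nonadjacent
vertices with large degree sum yields a Hamiltonian cycle. -/
lemma rotation_lemma {G : SimpleGraph V} {x y : V} (p : G.Walk x y) (hp : p.IsPath)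
    (hall : ∀ z, z ∈ p.support) (hne : x ≠ y) (hnadj : ¬ G.Adj x y)
    (hdeg : Fintype.card V ≤ vertexDegree G x + vertexDegree G y) :
    ∃ (v : V) (w : G.Walk v v), w.IsHamiltonianCycle := by
  classical
  have ham : p.IsHamiltonian := hp.isHamiltonian_of_mem hall
  have hlen : p.length = Fintype.card V - 1 := ham.length_eq
  have hn : 2 ≤ Fintype.card V := Fintype.one_lt_card_iff_nontrivial.mpr ⟨x, y, hne⟩
  set A := p.darts.toFinset.filter (fun d => G.Adj x d.snd) with hA_def
  set B := p.darts.toFinset.filter (fun d => G.Adj y d.fst) with hB_def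
  have hA : A.card = G.degree x := card_filter_darts_adj p hp hall
  have hBrev : (p.reverse.darts.toFinset.filter (fun d => G.Adj y d.snd)).card = G.degree y :=
    card_filter_darts_adj p.reverse hp.reverse (fun z => by simp [hall z])
  have hB : B.card = G.degree y := by
    rw [← hBrev]
    apply Finset.card_bij (fun d _ => d.symm)
    · intro d hd
      simp only [hB_def, Finset.mem_filter, List.mem_toFinset] at hd
      simp only [Finset.mem_filter, List.mem_toFinset, mem_darts_reverse, Dart.symm_symm]
      exact ⟨hd.1, hd.2⟩
    · intro d1 h1 d2 h2 h
      have := congrArg SimpleGraph.Dart.symm h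
      simpa using this
    · intro d hd
      refine ⟨d.symm, ?_, by simp⟩
      simp only [Finset.mem_filter, List.mem_toFinset, mem_darts_reverse] at hd
      simp only [hB_def, Finset.mem_filter, List.mem_toFinset]
      exact ⟨by simpa using hd.1, hd.2⟩
  have hdnodup : p.darts.Nodup := by
    have := hp.isTrail.edges_nodup
    rw [Walk.edges] at this
    exact this.of_map _
  have hcardD : p.darts.toFinset.card = Fintype.card V - 1 := by
    rw [List.toFinset_card_of_nodup hdnodup, length_darts, hlen]
  have hsub : A ∪ B ⊆ p.darts.toFinset := by
    intro d hd
    rcases Finset.mem_union.mp hd with h | h <;>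
      exact (Finset.mem_filter.mp h).1
  have hnonempty : (A ∩ B).Nonempty := by
    rw [← Finset.card_pos]
    have h1 : (A ∪ B).card ≤ Fintype.card V - 1 := hcardD ▸ Finset.card_le_card hsub
    have h2 := Finset.card_union_add_card_inter A B
    have h3 : Fintype.card V ≤ A.card + B.card := by
      rw [hA, hB, ← vertexDegree_eq_degree, ← vertexDegree_eq_degree]; exact hdeg
    omega
  obtain ⟨d, hd⟩ := hnonempty
  obtain ⟨hdA, hdB⟩ := Finset.mem_inter.mp hd
  have hdmem : d ∈ p.darts := List.mem_toFinset.mp (Finset.mem_filter.mp hdA).1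
  have hxu : G.Adj x d.snd := (Finset.mem_filter.mp hdA).2
  have hyw : G.Adj y d.fst := (Finset.mem_filter.mp hdB).2
  set u := d.snd with hu_def
  have hu : u ∈ p.support := p.dart_snd_mem_support_of_mem_darts hdmem
  set r1 := p.takeUntil u hu with hr1_def
  set r2 := p.dropUntil u hu with hr2_def
  have hspec : r1.append r2 = p := p.take_spec hu
  have hr1p : r1.IsPath := hp.takeUntil hu
  have hr2p : r2.IsPath := hp.dropUntil hu
  have hsup : p.support = r1.support ++ r2.support.tail := by
    rw [← hspec, support_append]
  have hnd : p.support.Nodup := hp.support_nodup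
  have hdisj12 : ∀ z ∈ r1.support, z ∉ r2.support.tail := by
    have := hsup ▸ hnd
    exact fun z hz => (List.disjoint_of_nodup_append this) hz
  have hd1 : d ∈ r1.darts := by
    have hdarts : p.darts = r1.darts ++ r2.darts := by rw [← hspec, darts_append]
    rcases List.mem_append.mp (hdarts ▸ hdmem) with h | h
    · exact h
    · exfalso
      have : u ∈ r2.support.tail := by
        rw [← map_snd_darts]
        exact List.mem_map.mpr ⟨d, h, rfl⟩
      exact hdisj12 u (r1.end_mem_support) this
  -- decompose r1.reverse
  have hds : d.symm ∈ r1.reverse.darts := mem_darts_reverse.mpr (by simpa using hd1)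
  have hnnil : ¬ r1.reverse.Nil := by
    rw [not_nil_iff_lt_length]
    have : r1.reverse.darts ≠ [] := List.ne_nil_of_mem hds
    have h2 := length_darts r1.reverse
    rcases Nat.eq_zero_or_pos r1.reverse.length with h | h
    · exact absurd (List.length_eq_zero_iff.mp (h2.trans h)) this
    · exact h
  obtain ⟨w', haduw', q, hq⟩ := not_nil_iff.mp hnnil
  have hrevpath : (Walk.cons haduw' q).IsPath := hq ▸ hr1p.reverse
  have hqpath : q.IsPath ∧ u ∉ q.support := (cons_isPath_iff _ _).mp hrevpath
  have hw' : w' = d.fst := by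
    have hd' : d.symm = Dart.mk (u, w') haduw' ∨ d.symm ∈ q.darts := by
      rw [hq, darts_cons] at hds
      simpa using hds
    rcases hd' with h | h
    · have := congrArg (fun d : G.Dart => d.toProd.2) h
      simpa using this.symm
    · exfalso
      have hfst : u ∈ q.darts.map (·.fst) := List.mem_map.mpr ⟨d.symm, h, by simp [hu_def]⟩
      rw [map_fst_darts] at hfst
      exact hqpath.2 (List.dropLast_subset _ hfst)
  subst hw'
  -- q : G.Walk d.fst x
  have hr1sup : r1.support = q.support.reverse ++ [u] := by
    have : r1 = (Walk.cons haduw' q).reverse := by rw [← hq, Walk.reverse_reverse]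
    rw [this, support_reverse, support_cons, List.reverse_cons]
  -- disjointness facts
  have hq_sub_r1 : ∀ z ∈ q.support, z ∈ r1.support := by
    intro z hz
    rw [hr1sup]
    exact List.mem_append_left _ (List.mem_reverse.mpr hz)
  have hdisj : ∀ z ∈ q.support, z ∉ r2.support := by
    intro z hz hz2
    rw [support_eq_cons] at hz2
    rcases List.mem_cons.mp hz2 with h | h
    · exact hqpath.2 (h ▸ hz)
    · exact hdisj12 z (hq_sub_r1 z hz) h
  have hx_q : x ∈ q.support := q.end_mem_support
  have hw_q : d.fst ∈ q.support := q.start_mem_support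
  have hy_r2 : y ∈ r2.support := r2.end_mem_support
  have hwx : d.fst ≠ x := by
    intro h
    exact hnadj (h ▸ hyw).symm
  -- the cycle
  refine ⟨u, r2.append (Walk.cons hyw (q.append (Walk.cons hxu Walk.nil))), ?_⟩
  set c : G.Walk u u := r2.append (Walk.cons hyw (q.append (Walk.cons hxu Walk.nil))) with hc_def
  have hcsup : c.support = r2.support ++ (q.support ++ [u]) := by
    simp [hc_def, support_append]
  have hctail : c.support.tail = r2.support.tail ++ (q.support ++ [u]) := by
    rw [hcsup, List.tail_append_of_ne_nil (support_ne_nil _)]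
  have hperm : c.support.tail ~ p.support := by
    rw [hctail, hsup, hr1sup]
    calc r2.support.tail ++ (q.support ++ [u])
        ~ (q.support ++ [u]) ++ r2.support.tail := List.perm_append_comm
      _ ~ (q.support.reverse ++ [u]) ++ r2.support.tail :=
          ((q.support.reverse_perm.symm.append_right [u]).append_right _)
  have hcount : ∀ z, c.support.tail.count z = 1 := fun z => by
    rw [hperm.count_eq]; exact ham z
  have hced : c.edges = r2.edges ++ (s(y, d.fst) :: (q.edges ++ [s(x, u)])) := by
    simp [hc_def, edges_append]
  have hq_ed : q.edges.Nodup := hqpath.1.isTrail.edges_nodup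
  have hr2_ed : r2.edges.Nodup := hr2p.isTrail.edges_nodup
  have hcross : ∀ e ∈ q.edges, e ∉ r2.edges := by
    intro e he he2
    induction e using Sym2.ind with
    | _ a b =>
      exact hdisj a (q.fst_mem_support_of_mem_edges he) (r2.fst_mem_support_of_mem_edges he2)
  have h_yw_q : s(y, d.fst) ∉ q.edges := fun h =>
    hdisj y (q.fst_mem_support_of_mem_edges h) hy_r2
  have h_yw_r2 : s(y, d.fst) ∉ r2.edges := fun h =>
    hdisj d.fst hw_q (r2.snd_mem_support_of_mem_edges h)
  have h_xu_q : s(x, u) ∉ q.edges := fun h =>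
    hqpath.2 (q.snd_mem_support_of_mem_edges h)
  have h_xu_r2 : s(x, u) ∉ r2.edges := fun h =>
    hdisj x hx_q (r2.fst_mem_support_of_mem_edges h)
  have h_ne_edges : s(y, d.fst) ≠ s(x, u) := by
    intro hcontra
    rcases Sym2.eq_iff.mp hcontra with ⟨h1, h2⟩ | ⟨h1, h2⟩
    · exact hne h1.symm
    · exact hwx h2
  have hced_nodup : c.edges.Nodup := by
    rw [hced]
    rw [List.nodup_append]
    refine ⟨hr2_ed, ?_, ?_⟩
    · rw [List.nodup_cons]
      constructor
      · intro h
        rcases List.mem_append.mp h with h | h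
        · exact h_yw_q h
        · rcases List.mem_singleton.mp h with h
          exact h_ne_edges h
      · rw [List.nodup_append]
        exact ⟨hq_ed, List.nodup_singleton _, fun e he e' he' heq =>
          h_xu_q (by rw [← List.mem_singleton.mp he', ← heq]; exact he)⟩
    · intro e he e' he' heq; subst heq
      rcases List.mem_cons.mp he' with h | h
      · exact h_yw_r2 (h ▸ he)
      · rcases List.mem_append.mp h with h | h
        · exact hcross e h he
        · exact h_xu_r2 ((List.mem_singleton.mp h) ▸ he)
  rw [isHamiltonianCycle_iff_isCycle_and_support_count_tail_eq_one]
  refine ⟨?_, hcount⟩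
  rw [isCycle_def]
  refine ⟨⟨hced_nodup⟩, ?_, List.nodup_iff_count_le_one.mpr (fun a => le_of_eq (hcount a))⟩
  intro hnil
  have := congrArg Walk.length hnil
  simp [hc_def] at this

/-- Rotating a Hamiltonian cycle gives a Hamiltonian cycle. -/
lemma hamCycle_rotate {G : SimpleGraph V} {v u : V} {c : G.Walk v v}
    (hc : c.IsHamiltonianCycle) (h : u ∈ c.support) :
    (c.rotate u h).IsHamiltonianCycle := by
  rw [isHamiltonianCycle_iff_isCycle_and_support_count_tail_eq_one] at hc ⊢
  exact ⟨hc.1.rotate h, fun a => by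
    rw [((support_rotate c u h).perm).count_eq]; exact hc.2 a⟩

/-- From a Hamiltonian cycle through a dart, extract a Hamiltonian path
avoiding that dart's edge. -/
lemma ham_path_of_cycle_dart {G : SimpleGraph V} {v : V} {c : G.Walk v v}
    (hc : c.IsHamiltonianCycle) {d : G.Dart} (hd : d ∈ c.darts) :
    ∃ q : G.Walk d.snd d.fst, q.IsPath ∧ (∀ z, z ∈ q.support) ∧ d.edge ∉ q.edges := by
  have hfst : d.fst ∈ c.support := c.dart_fst_mem_support_of_mem_darts hd
  have hc' := hamCycle_rotate hc hfst
  have hd' : d ∈ (c.rotate d.fst hfst).darts := ((rotate_darts c d.fst hfst).perm).mem_iff.mpr hd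
  have hnnil : ¬ (c.rotate d.fst hfst).Nil := hc'.isCycle.not_nil
  obtain ⟨b, hadj, q, hq⟩ := not_nil_iff.mp hnnil
  have hcyc : (Walk.cons hadj q).IsCycle := hq ▸ hc'.isCycle
  have hqp : q.IsPath ∧ s(d.fst, b) ∉ q.edges := (cons_isCycle_iff q hadj).mp hcyc
  have hb : b = d.snd := by
    have hd'' : d = Dart.mk (d.fst, b) hadj ∨ d ∈ q.darts := by
      rw [hq, darts_cons] at hd'
      simpa using hd'
    rcases hd'' with h | h
    · have := congrArg (fun d : G.Dart => d.toProd.2) h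
      simpa using this.symm
    · exfalso
      have hfst2 : d.fst ∈ q.darts.map (·.fst) := List.mem_map.mpr ⟨d, h, rfl⟩
      rw [map_fst_darts] at hfst2
      have hsupnd : q.support.Nodup := by
        have := hcyc.2
        rwa [support_cons, List.tail_cons] at this
      have hql : q.support = q.support.dropLast ++ [q.support.getLast q.support_ne_nil] := by
        rw [List.dropLast_append_getLast]
      have hgl : q.support.getLast q.support_ne_nil = d.fst := q.getLast_support
      rw [hql, hgl] at hsupnd
      exact (List.disjoint_of_nodup_append hsupnd) hfst2 (List.mem_singleton.mpr rfl)
  subst hb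
  refine ⟨q, hqp.1, ?_, ?_⟩
  · intro z
    have := hc'.isHamiltonian_tail.mem_support z
    have htail : (c.rotate d.fst hfst).tail.support = q.support := by
      rw [hq]
      simp [Walk.tail_cons, support_copy]
    rwa [htail] at this
  · have : d.edge = s(d.fst, d.snd) := rfl
    rw [this]
    exact hqp.2

/-- The Ore one-edge-addition step. -/
lemma ore_step {G : SimpleGraph V} {x y : V} (hne : x ≠ y) (hnadj : ¬ G.Adj x y)
    (hdeg : Fintype.card V ≤ vertexDegree G x + vertexDegree G y)
    (h : ∃ (v : V) (w : (G ⊔ SimpleGraph.edge x y).Walk v v), w.IsHamiltonianCycle) :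
    ∃ (v : V) (w : G.Walk v v), w.IsHamiltonianCycle := by
  classical
  obtain ⟨v, c, hc⟩ := h
  have hedgeset : (G ⊔ SimpleGraph.edge x y).edgeSet = G.edgeSet ∪ {s(x, y)} := by
    rw [edgeSet_sup, edge_edgeSet_of_ne hne]
  by_cases he : s(x, y) ∈ c.edges
  · -- the cycle uses the new edge
    have hedges : c.edges = c.darts.map Dart.edge := rfl
    obtain ⟨d, hd, hde⟩ := List.mem_map.mp (hedges ▸ he)
    obtain ⟨q, hqp, hall, hqe⟩ := ham_path_of_cycle_dart hc hd
    have hsub : ∀ e ∈ q.edges, e ∈ G.edgeSet := by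
      intro e hee
      have h1 : e ∈ (G ⊔ SimpleGraph.edge x y).edgeSet := q.edges_subset_edgeSet hee
      rw [hedgeset] at h1
      rcases h1 with h1 | h1
      · exact h1
      · exact absurd (hde ▸ (Set.mem_singleton_iff.mp h1).symm ▸ hee) hqe
    set q' := q.transfer G hsub with hq'_def
    have hq'p : q'.IsPath := hqp.transfer hsub
    have hall' : ∀ z, z ∈ q'.support := by
      intro z
      rw [hq'_def, support_transfer]
      exact hall z
    have hde' : s(d.fst, d.snd) = s(x, y) := hde
    rw [Sym2.eq_iff] at hde'
    rcases hde' with ⟨h1, h2⟩ | ⟨h1, h2⟩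
    · -- d.fst = x, d.snd = y : q' : Walk y x
      refine rotation_lemma (q'.copy h2 h1) ?_ ?_ hne.symm (fun hadj => hnadj hadj.symm)
        (by omega)
      · rwa [Walk.isPath_copy]
      · intro z; rw [Walk.support_copy]; exact hall' z
    · -- d.fst = y, d.snd = x : q' : Walk x y
      refine rotation_lemma (q'.copy h2 h1) ?_ ?_ hne hnadj hdeg
      · rwa [Walk.isPath_copy]
      · intro z; rw [Walk.support_copy]; exact hall' z
  · -- the cycle avoids the new edge: transfer it
    have hsub : ∀ e ∈ c.edges, e ∈ G.edgeSet := by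
      intro e hee
      have h1 : e ∈ (G ⊔ SimpleGraph.edge x y).edgeSet := c.edges_subset_edgeSet hee
      rw [hedgeset] at h1
      rcases h1 with h1 | h1
      · exact h1
      · exact absurd ((Set.mem_singleton_iff.mp h1) ▸ hee) he
    refine ⟨v, c.transfer G hsub, ?_⟩
    rw [isHamiltonianCycle_iff_isCycle_and_support_count_tail_eq_one] at hc ⊢
    refine ⟨hc.1.transfer hsub, fun a => ?_⟩
    rw [support_transfer]
    exact hc.2 a

lemma closure_aux (Γ : SimpleGraph V) :
    ∀ (k : ℕ) (G : SimpleGraph V), Γ ≤ G → G ≤ graphClosure Γ →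
      ((graphClosure Γ).edgeSet \ G.edgeSet).ncard = k →
      (∃ (v : V) (w : (graphClosure Γ).Walk v v), w.IsHamiltonianCycle) →
      ∃ (v : V) (w : G.Walk v v), w.IsHamiltonianCycle := by
  intro k
  induction k with
  | zero =>
    rintro G h1 h2 h3 ⟨v, w, hw⟩
    have hfin : ((graphClosure Γ).edgeSet \ G.edgeSet).Finite := Set.toFinite _
    have hle : graphClosure Γ ≤ G := by
      rw [← edgeSet_subset_edgeSet, ← Set.diff_eq_empty]
      exact (Set.ncard_eq_zero hfin).mp h3
    exact ⟨v, w.map (SimpleGraph.Hom.ofLE hle), hw.map Function.bijective_id⟩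
  | succ k ih =>
    intro G h1 h2 h3 hham
    have hfin : ((graphClosure Γ).edgeSet \ G.edgeSet).Finite := Set.toFinite _
    have hne : ((graphClosure Γ).edgeSet \ G.edgeSet).Nonempty :=
      Set.nonempty_of_ncard_ne_zero (by omega)
    obtain ⟨e, he⟩ := hne
    revert he
    refine Sym2.ind (fun x y he => ?_) e
    obtain ⟨he1, he2⟩ := he
    have hadj : (graphClosure Γ).Adj x y := he1
    have hxy : x ≠ y := hadj.1
    have hnadj : ¬ G.Adj x y := he2
    have hG'1 : Γ ≤ G ⊔ SimpleGraph.edge x y := le_trans h1 le_sup_left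
    have hG'2 : G ⊔ SimpleGraph.edge x y ≤ graphClosure Γ := by
      refine sup_le h2 ?_
      intro a b hab
      rw [SimpleGraph.edge_adj] at hab
      rcases hab.1 with ⟨rfl, rfl⟩ | ⟨rfl, rfl⟩
      · exact hadj
      · exact hadj.symm
    have hcard : ((graphClosure Γ).edgeSet \ (G ⊔ SimpleGraph.edge x y).edgeSet).ncard = k := by
      have hset : (graphClosure Γ).edgeSet \ (G ⊔ SimpleGraph.edge x y).edgeSet =
          ((graphClosure Γ).edgeSet \ G.edgeSet) \ {s(x, y)} := by
        rw [edgeSet_sup, edge_edgeSet_of_ne hxy]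
        ext f
        simp only [Set.mem_diff, Set.mem_union, Set.mem_singleton_iff]
        tauto
      have hmem : s(x, y) ∈ (graphClosure Γ).edgeSet \ G.edgeSet := Set.mem_diff _ |>.mpr ⟨he1, he2⟩
      rw [hset, Set.ncard_diff_singleton_of_mem hmem, h3]
      omega
    have hham' := ih (G ⊔ SimpleGraph.edge x y) hG'1 hG'2 hcard hham
    have hdegΓ : Fintype.card V ≤ vertexDegree Γ x + vertexDegree Γ y := by
      rcases hadj.2 with h | h
      · exact absurd (h1 h) hnadj
      · exact h
    have hdeg : Fintype.card V ≤ vertexDegree G x + vertexDegree G y :=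
      le_trans hdegΓ (Nat.add_le_add (vertexDegree_mono h1 x) (vertexDegree_mono h1 y))
    exact ore_step hxy hnadj hdeg hham'

end Aux

/-- closure criterion: a finite graph contains a Hamiltonian
cycle if and only if its closure contains a Hamiltonian cycle. -/
theorem stmt_7 {V : Type*} [Fintype V] [DecidableEq V] (Γ : SimpleGraph V) :
    (∃ (v : V) (w : Γ.Walk v v), w.IsHamiltonianCycle) ↔
      ∃ (v : V) (w : (graphClosure Γ).Walk v v), w.IsHamiltonianCycle := by
  have hle : Γ ≤ graphClosure Γ := fun {a b} h => ⟨h.ne, Or.inl h⟩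
  constructor
  · rintro ⟨v, w, hw⟩
    exact ⟨v, w.map (SimpleGraph.Hom.ofLE hle), hw.map Function.bijective_id⟩
  · intro h
    exact closure_aux Γ _ Γ le_rfl hle rfl h
end

section
/- Let G be a nonsolvable finite group such that G/N is cyclic for every nontrivial normal subgroup N of G. Then G has a unique minimal normal subgroup, this socle Soc(G) is nonsolvable, and G embeds into Aut(Soc(G)). -/
/-- `N` is a minimal normal subgroup of `G`. -/
def IsMinimalNormalSubgroup {G : Type*} [Group G] (N : Subgroup G) : Prop :=
  N.Normal ∧ N ≠ ⊥ ∧ ∀ K : Subgroup G, K.Normal → K ≠ ⊥ → K ≤ N → K = N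

/-- The socle of `G`: the subgroup generated by all minimal normal subgroups. -/
def groupSocle (G : Type*) [Group G] : Subgroup G :=
  ⨆ N ∈ {N : Subgroup G | IsMinimalNormalSubgroup N}, N

/-- Every nontrivial normal subgroup of a finite group contains a minimal
normal subgroup. -/
lemma exists_minimal_normal_le {G : Type*} [Group G] [Finite G] (K : Subgroup G)
    (hK : K.Normal) (hKbot : K ≠ ⊥) :
    ∃ N : Subgroup G, IsMinimalNormalSubgroup N ∧ N ≤ K := by
  obtain ⟨N, ⟨hN, hNbot, hNK⟩, hmin⟩ :=
    (wellFounded_lt : WellFounded ((· < ·) : Subgroup G → Subgroup G → Prop)).has_min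
      {H : Subgroup G | H.Normal ∧ H ≠ ⊥ ∧ H ≤ K} ⟨K, hK, hKbot, le_rfl⟩
  refine ⟨N, ⟨hN, hNbot, fun K' hK'n hK'b hK'le => ?_⟩, hNK⟩
  by_contra hne
  exact hmin K' ⟨hK'n, hK'b, hK'le.trans hNK⟩ (lt_of_le_of_ne hK'le hne)

/-- a nonsolvable finite group all of whose quotients by nontrivial
normal subgroups are cyclic has a unique minimal normal subgroup, its socle is
nonsolvable, and it embeds into the automorphism group of its socle. -/
theorem stmt_8 {G : Type*} [Group G] [Finite G] (hns : ¬ IsSolvable G)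
    (hcyc : ∀ (N : Subgroup G) [N.Normal], N ≠ ⊥ →
      IsCyclic (G ⧸ N)) :
    (∃! N : Subgroup G, IsMinimalNormalSubgroup N) ∧
      ¬ IsSolvable (groupSocle G) ∧
      ∃ φ : G →* MulAut (groupSocle G), Function.Injective φ := by
  -- G is nontrivial
  have hnt : (⊤ : Subgroup G) ≠ ⊥ := by
    intro h
    apply hns
    have : Subsingleton G := by
      constructor
      intro a b
      have ha : a ∈ (⊥ : Subgroup G) := h ▸ Subgroup.mem_top a
      have hb : b ∈ (⊥ : Subgroup G) := h ▸ Subgroup.mem_top b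
      rw [Subgroup.mem_bot] at ha hb
      rw [ha, hb]
    exact isSolvable_of_comm fun a b => Subsingleton.elim _ _
  obtain ⟨N, ⟨hNnorm, hNbot, hNmin⟩, -⟩ := exists_minimal_normal_le ⊤ inferInstance hnt
  haveI := hNnorm
  haveI : IsCyclic (G ⧸ N) := hcyc N hNbot
  haveI : IsSolvable (G ⧸ N) := by
    letI : CommGroup (G ⧸ N) := IsCyclic.commGroup
    exact isSolvable_of_comm fun a b => mul_comm a b
  -- N is not solvable
  have hNns : ¬ IsSolvable N := by
    intro hs
    haveI : Group.IsSolvable N := hs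
    apply hns
    refine solvable_of_ker_le_range N.subtype (QuotientGroup.mk' N) ?_
    rw [QuotientGroup.ker_mk', Subgroup.range_subtype]
  -- uniqueness
  have huniq : ∀ M : Subgroup G, IsMinimalNormalSubgroup M → M = N := by
    rintro M ⟨hMnorm, hMbot, hMmin⟩
    haveI := hMnorm
    have hinf : M ⊓ N ≠ ⊥ := by
      intro h
      -- M embeds into the cyclic group G ⧸ N, hence M is solvable
      haveI : IsSolvable M := by
        refine solvable_of_solvable_injective (f := (QuotientGroup.mk' N).comp M.subtype) ?_
        rw [← MonoidHom.ker_eq_bot_iff]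
        rw [eq_bot_iff]
        intro m hm
        simp only [MonoidHom.mem_ker, MonoidHom.comp_apply, QuotientGroup.mk'_apply,
          QuotientGroup.eq_one_iff] at hm
        have : (m : G) ∈ M ⊓ N := ⟨m.2, hm⟩
        rw [h, Subgroup.mem_bot] at this
        simpa [Subgroup.mem_bot] using this
      haveI : IsCyclic (G ⧸ M) := hcyc M hMbot
      haveI : IsSolvable (G ⧸ M) := by
        letI : CommGroup (G ⧸ M) := IsCyclic.commGroup
        exact isSolvable_of_comm fun a b => mul_comm a b
      haveI : Group.IsSolvable M := ‹IsSolvable M›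
      apply hns
      refine solvable_of_ker_le_range M.subtype (QuotientGroup.mk' M) ?_
      rw [QuotientGroup.ker_mk', Subgroup.range_subtype]
    have h1 : M ⊓ N = N := hNmin (M ⊓ N) inferInstance hinf inf_le_right
    have h2 : M ⊓ N = M := hMmin (M ⊓ N) inferInstance hinf inf_le_left
    rw [← h1, h2]
  -- the socle is N
  have hset : {N' : Subgroup G | IsMinimalNormalSubgroup N'} = {N} := by
    ext M
    simp only [Set.mem_setOf_eq, Set.mem_singleton_iff]
    exact ⟨fun h => huniq M h, fun h => h ▸ ⟨hNnorm, hNbot, hNmin⟩⟩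
  have hsoc : groupSocle G = N := by
    rw [groupSocle, hset]
    simp
  refine ⟨⟨N, ⟨hNnorm, hNbot, hNmin⟩, huniq⟩, ?_, ?_⟩
  · rw [hsoc]; exact hNns
  · rw [hsoc]
    refine ⟨MulAut.conjNormal, ?_⟩
    rw [← MonoidHom.ker_eq_bot_iff]
    by_contra hker
    obtain ⟨M, hM, hMker⟩ :=
      exists_minimal_normal_le (MulAut.conjNormal (H := N)).ker inferInstance hker
    have hNker : N ≤ (MulAut.conjNormal (H := N)).ker := (huniq M hM) ▸ hMker
    apply hNns
    refine isSolvable_of_comm fun a b => ?_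
    have ha : MulAut.conjNormal (a : G) = 1 := hNker a.2
    have : ((MulAut.conjNormal (a : G)) b : G) = b := by rw [ha]; rfl
    rw [MulAut.conjNormal_apply] at this
    have : (a : G) * b = b * a := by
      have := congrArg (· * (a : G)) this
      simpa [mul_assoc] using this
    exact Subtype.ext this
end
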